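/- Under hyper-generalized recurrence with recurrence 1-forms A and B, the conharmonic curvature tensor satisfies ∇_U ℂ = A(U)·ℂ − (2r/(n−2))·B(U)·G for all U ∈ V. In particular, if r ≠ 0, then the 1-form B' := −(2r/(n−2))·B is nonzero and ∇_U ℂ = A(U)·ℂ + B'(U)·G, i.e. the space is generalized conharmonically recurrent. (Theorem 3.2(a).) -/

import Mathlib

open scoped BigOperators

/-- Kulkarni–Nomizu product of two bilinear forms (as real-valued functions). -/
def KN {V : Type*} (h k : V → V → ℝ) (X Y Z W : V) : ℝ :=
  h X Z * k Y W + h Y W * k X Z - h X W * k Y Z - h Y Z * k X W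

/-- The tensor `G(X,Y,Z,W) = g(X,Z)g(Y,W) - g(Y,Z)g(X,W)`. -/
def Gten {V : Type*} (g : V → V → ℝ) (X Y Z W : V) : ℝ :=
  g X Z * g Y W - g Y Z * g X W

/-- Derivation action of the curvature endomorphism `Rend U V` on a quadrilinear form `T`. -/
def derAct {V : Type*} (Rend : V → V → V → V) (T : V → V → V → V → ℝ)
    (U V' X Y Z W : V) : ℝ :=
  - T (Rend U V' X) Y Z W - T X (Rend U V' Y) Z W
    - T X Y (Rend U V' Z) W - T X Y Z (Rend U V' W)

theorem hgr_generalized_conharmonically_recurrent {V : Type*} [AddCommGroup V] [Module ℝ V]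
    (n : ℕ) (hn : 3 ≤ n)
    (b : Module.Basis (Fin n) ℝ V) (e' : Fin n → V)
    (g : V →ₗ[ℝ] V →ₗ[ℝ] ℝ)
    (hg_symm : ∀ X Y, g X Y = g Y X)
    (hg_nd : ∀ X, (∀ Y, g X Y = 0) → X = 0)
    (hdual : ∀ i j, g (b i) (e' j) = if i = j then (1 : ℝ) else 0)
    (R : V →ₗ[ℝ] V →ₗ[ℝ] V →ₗ[ℝ] V →ₗ[ℝ] ℝ)
    (hR_ne : R ≠ 0)
    (hR_anti : ∀ X Y Z W, R X Y Z W = - R Y X Z W)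
    (hR_pair : ∀ X Y Z W, R X Y Z W = R Z W X Y)
    (Ric : V → V → ℝ)
    (hRic : ∀ X Z, Ric X Z = ∑ i, R X (b i) Z (e' i))
    (r : ℝ) (hr : r = ∑ i, Ric (b i) (e' i))
    (D : V →ₗ[ℝ] V →ₗ[ℝ] V →ₗ[ℝ] V →ₗ[ℝ] V →ₗ[ℝ] ℝ)
    (hBianchi : ∀ X Y Z W U, D X Y Z W U + D Y Z X W U + D Z X Y W U = 0)
    (A B : V →ₗ[ℝ] ℝ) (hA : A ≠ 0) (hB : B ≠ 0)
    (hHGR : ∀ U X Y Z W,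
      D U X Y Z W = A U * R X Y Z W + B U * KN (fun a c => g a c) Ric X Y Z W)
    (DRic : V → V → V → ℝ)
    (hDRicDef : ∀ U X Z, DRic U X Z = ∑ i, D U X (b i) Z (e' i))
    (Cc : V → V → V → V → ℝ)
    (hCc : ∀ X Y Z W, Cc X Y Z W
      = R X Y Z W - (1 / ((n : ℝ) - 2)) * KN (fun a c => g a c) Ric X Y Z W)
    (DC : V → V → V → V → V → ℝ)
    (hDC : ∀ U X Y Z W, DC U X Y Z W
      = D U X Y Z W - (1 / ((n : ℝ) - 2)) * KN (fun a c => g a c) (DRic U) X Y Z W)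
    :
    (∀ U X Y Z W, DC U X Y Z W
        = A U * Cc X Y Z W
          - 2 * r / ((n : ℝ) - 2) * B U * Gten (fun a c => g a c) X Y Z W) ∧
    (r ≠ 0 →
      (-(2 * r / ((n : ℝ) - 2))) • B ≠ (0 : V →ₗ[ℝ] ℝ) ∧
      ∀ U X Y Z W, DC U X Y Z W
        = A U * Cc X Y Z W
          + ((-(2 * r / ((n : ℝ) - 2))) • B) U * Gten (fun a c => g a c) X Y Z W) := by
  have hn2 : ((n : ℝ) - 2) ≠ 0 := by
    have : (3 : ℝ) ≤ (n : ℝ) := by exact_mod_cast hn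
    linarith
  -- expansion in terms of e'
  have E1 : ∀ Z : V, ∑ i, g Z (b i) • e' i = Z := by
    intro Z
    have key : ∀ j, g (b j) (Z - ∑ i, g Z (b i) • e' i) = 0 := by
      intro j
      simp only [map_sub, map_sum, map_smul, smul_eq_mul, hdual, mul_ite, mul_one, mul_zero,
        Finset.sum_ite_eq, Finset.mem_univ, if_true]
      rw [hg_symm (b j) Z]; ring
    have hW : ∀ Y, g (Z - ∑ i, g Z (b i) • e' i) Y = 0 := by
      intro Y
      have hY := b.sum_repr Y
      calc g (Z - ∑ i, g Z (b i) • e' i) Y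
          = g (Z - ∑ i, g Z (b i) • e' i) (∑ i, b.repr Y i • b i) := by rw [hY]
        _ = ∑ i, b.repr Y i * g (Z - ∑ i, g Z (b i) • e' i) (b i) := by
            rw [map_sum]; simp [smul_eq_mul]
        _ = 0 := by
            refine Finset.sum_eq_zero fun i _ => ?_
            rw [hg_symm, key]; ring
    have := hg_nd _ hW
    exact (sub_eq_zero.mp this).symm
  -- expansion in terms of b
  have E2 : ∀ X : V, ∑ i, g X (e' i) • b i = X := by
    intro X
    have key : ∀ j, g (X - ∑ i, g X (e' i) • b i) (e' j) = 0 := by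
      intro j
      simp only [map_sub, LinearMap.sub_apply, map_sum, LinearMap.sum_apply, map_smul,
        LinearMap.smul_apply, smul_eq_mul, hdual, mul_ite, mul_one, mul_zero,
        Finset.sum_ite_eq', Finset.mem_univ, if_true]
      ring
    have hW : ∀ Y, g (X - ∑ i, g X (e' i) • b i) Y = 0 := by
      intro Y
      calc g (X - ∑ i, g X (e' i) • b i) Y
          = g (X - ∑ i, g X (e' i) • b i) (∑ i, g Y (b i) • e' i) := by rw [E1 Y]
        _ = ∑ i, g Y (b i) * g (X - ∑ i, g X (e' i) • b i) (e' i) := by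
            rw [map_sum]; simp [smul_eq_mul]
        _ = 0 := by
            refine Finset.sum_eq_zero fun i _ => ?_
            rw [key]; ring
    have := hg_nd _ hW
    exact (sub_eq_zero.mp this).symm
  -- trace identities
  have S2 : ∑ i : Fin n, g (b i) (e' i) = (n : ℝ) := by
    simp [hdual]
  have S3 : ∀ X Z : V, ∑ i, g X (e' i) * Ric (b i) Z = Ric X Z := by
    intro X Z
    have step : ∀ j, ∑ i, g X (e' i) * R (b i) (b j) Z (e' j) = R X (b j) Z (e' j) := by
      intro j
      conv_rhs => rw [← E2 X]
      rw [map_sum, LinearMap.sum_apply, LinearMap.sum_apply, LinearMap.sum_apply]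
      refine Finset.sum_congr rfl fun i _ => ?_
      rw [map_smul]; simp [smul_eq_mul]
    calc ∑ i, g X (e' i) * Ric (b i) Z
        = ∑ i, ∑ j, g X (e' i) * R (b i) (b j) Z (e' j) := by
          refine Finset.sum_congr rfl fun i _ => ?_
          rw [hRic, Finset.mul_sum]
      _ = ∑ j, ∑ i, g X (e' i) * R (b i) (b j) Z (e' j) := Finset.sum_comm
      _ = ∑ j, R X (b j) Z (e' j) := Finset.sum_congr rfl fun j _ => step j
      _ = Ric X Z := (hRic X Z).symm
  have S4 : ∀ X Z : V, ∑ i, g (b i) Z * Ric X (e' i) = Ric X Z := by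
    intro X Z
    have step : ∀ j, ∑ i, g (b i) Z * R X (b j) (e' i) (e' j) = R X (b j) Z (e' j) := by
      intro j
      conv_rhs => rw [← E1 Z]
      rw [map_sum, LinearMap.sum_apply]
      refine Finset.sum_congr rfl fun i _ => ?_
      rw [map_smul]; simp [smul_eq_mul, hg_symm Z (b i)]
    calc ∑ i, g (b i) Z * Ric X (e' i)
        = ∑ i, ∑ j, g (b i) Z * R X (b j) (e' i) (e' j) := by
          refine Finset.sum_congr rfl fun i _ => ?_
          rw [hRic, Finset.mul_sum]
      _ = ∑ j, ∑ i, g (b i) Z * R X (b j) (e' i) (e' j) := Finset.sum_comm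
      _ = ∑ j, R X (b j) Z (e' j) := Finset.sum_congr rfl fun j _ => step j
      _ = Ric X Z := (hRic X Z).symm
  -- contraction of the KN product
  have SKN : ∀ X Z : V, ∑ i, KN (fun a c => g a c) Ric X (b i) Z (e' i)
      = r * g X Z + ((n : ℝ) - 2) * Ric X Z := by
    intro X Z
    simp only [KN]
    rw [Finset.sum_sub_distrib, Finset.sum_sub_distrib, Finset.sum_add_distrib]
    rw [← Finset.mul_sum, ← hr, S3, S4]
    have : ∑ i : Fin n, g (b i) (e' i) * Ric X Z = (n : ℝ) * Ric X Z := by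
      rw [← Finset.sum_mul, S2]
    rw [this]; ring
  -- the derivative of the Ricci tensor
  have hDRic : ∀ U X Z, DRic U X Z
      = A U * Ric X Z + B U * (r * g X Z + ((n : ℝ) - 2) * Ric X Z) := by
    intro U X Z
    rw [hDRicDef]
    calc ∑ i, D U X (b i) Z (e' i)
        = ∑ i, (A U * R X (b i) Z (e' i)
            + B U * KN (fun a c => g a c) Ric X (b i) Z (e' i)) := by
          refine Finset.sum_congr rfl fun i _ => hHGR U X (b i) Z (e' i)
      _ = A U * ∑ i, R X (b i) Z (e' i)
            + B U * ∑ i, KN (fun a c => g a c) Ric X (b i) Z (e' i) := by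
          rw [Finset.sum_add_distrib, Finset.mul_sum, Finset.mul_sum]
      _ = A U * Ric X Z + B U * (r * g X Z + ((n : ℝ) - 2) * Ric X Z) := by
          rw [← hRic, SKN]
  -- the main formula
  have main : ∀ U X Y Z W, DC U X Y Z W
      = A U * Cc X Y Z W
        - 2 * r / ((n : ℝ) - 2) * B U * Gten (fun a c => g a c) X Y Z W := by
    intro U X Y Z W
    rw [hDC, hCc, hHGR]
    simp only [KN, Gten, hDRic]
    field_simp
    ring
  refine ⟨main, fun hrne => ⟨?_, ?_⟩⟩
  · have hc : (-(2 * r / ((n : ℝ) - 2))) ≠ 0 := by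
      simp only [ne_eq, neg_eq_zero, div_eq_zero_iff, not_or]
      constructor
      · intro h
        rcases mul_eq_zero.mp h with h | h
        · norm_num at h
        · exact hrne h
      · exact hn2
    exact smul_ne_zero hc hB
  · intro U X Y Z W
    rw [main U X Y Z W]
    simp only [LinearMap.smul_apply, smul_eq_mul]
    ring
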